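/- A strongly connected directed graph G with nonnegative arc costs is ξ-min-balanced if and only if for all nodes i and j, the bottleneck cost satisfies b(j,i) ≤ ξ·b(i,j), where b(i,j) is the minimum over all directed i–j paths P of the maximum arc cost on P. -/

import Mathlib

open scoped Classical

variable {V : Type*}

/-- `IsWalk A u v l`: `u :: l` is a directed walk from `u` to `v` in the digraph with
arc relation `A`. -/
def IsWalk (A : V → V → Prop) (u v : V) (l : List V) : Prop :=
  List.Chain A u l ∧ (u :: l).getLast (List.cons_ne_nil u l) = v

/-- The list of arcs of the walk `u :: l`. -/
def walkArcs (u : V) (l : List V) : List (V × V) := (u :: l).zip l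

/-- The cost of a walk: the sum of the costs of its arcs. -/
noncomputable def walkCost (c : V → V → ℝ) (u : V) (l : List V) : ℝ :=
  ((walkArcs u l).map fun e => c e.1 e.2).sum

/-- A (simple) directed cycle through the arc `(x, y)`: the arc `(x, y)` together with a
walk from `y` back to `x` visiting pairwise distinct nodes. -/
def IsCycleThrough (A : V → V → Prop) (x y : V) (l : List V) : Prop :=
  A x y ∧ IsWalk A y x l ∧ (y :: l).Nodup

/-- The arcs of the cycle through `(x, y)` given by the return walk `y :: l`. -/
def cycleArcs (x y : V) (l : List V) : List (V × V) := (x, y) :: walkArcs y l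

/-- `G = (V, A, c)` is `ξ`-min-balanced: every arc lies on a directed cycle all of whose
arcs have cost at most `ξ` times the cost of the given arc. -/
def MinBalanced (A : V → V → Prop) (c : V → V → ℝ) (ξ : ℝ) : Prop :=
  ∀ x y, A x y → ∃ l, IsCycleThrough A x y l ∧
    ∀ f ∈ cycleArcs x y l, c f.1 f.2 ≤ ξ * c x y

/-- A digraph is strongly connected if there is a directed walk between any two nodes. -/
def StronglyConnected (A : V → V → Prop) : Prop := ∀ u v : V, ∃ l, IsWalk A u v l

/-- The bottleneck cost `b(i,j)`: the least `t` such that there is a directed `i`–`j`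
walk all of whose arcs have cost at most `t`. -/
noncomputable def bottleneck (A : V → V → Prop) (c : V → V → ℝ) (i j : V) : ℝ :=
  sInf {t | ∃ l, IsWalk A i j l ∧ ∀ f ∈ walkArcs i l, c f.1 f.2 ≤ t}

/-- The balance value `β(e)` of the arc `e = (x, y)`: the smallest `r` such that there is
a directed cycle through `e` all of whose arcs have cost at most `r`. -/
noncomputable def balanceValue (A : V → V → Prop) (c : V → V → ℝ) (x y : V) : ℝ :=
  sInf {r | ∃ l, IsCycleThrough A x y l ∧ ∀ f ∈ cycleArcs x y l, c f.1 f.2 ≤ r}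

theorem isWalk_nil_iff {A : V → V → Prop} {u v : V} : IsWalk A u v [] ↔ u = v := by
  simp [IsWalk, List.Chain]

theorem isWalk_cons_iff {A : V → V → Prop} {u v a : V} {l : List V} :
    IsWalk A u v (a :: l) ↔ A u a ∧ IsWalk A a v l := by
  simp [IsWalk, List.Chain, and_assoc]

@[simp] theorem walkArcs_nil (u : V) : walkArcs u ([] : List V) = [] := rfl

@[simp] theorem walkArcs_cons (u a : V) (l : List V) :
    walkArcs u (a :: l) = (u, a) :: walkArcs a l := by
  simp [walkArcs, List.zip_cons_cons]

theorem walkArcs_append (u : V) (l1 l2 : List V) :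
    walkArcs u (l1 ++ l2)
      = walkArcs u l1 ++ walkArcs ((u :: l1).getLast (List.cons_ne_nil u l1)) l2 := by
  induction l1 generalizing u with
  | nil => simp
  | cons a t ih => simp [ih a, List.getLast_cons]

theorem isWalk_append {A : V → V → Prop} {u v w : V} {l1 l2 : List V}
    (h1 : IsWalk A u v l1) (h2 : IsWalk A v w l2) : IsWalk A u w (l1 ++ l2) := by
  induction l1 generalizing u with
  | nil => rw [isWalk_nil_iff] at h1; subst h1; simpa using h2
  | cons a t ih =>
    rw [isWalk_cons_iff] at h1
    rw [List.cons_append, isWalk_cons_iff]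
    exact ⟨h1.1, ih h1.2⟩

theorem isWalk_getLast {A : V → V → Prop} {u v : V} {l : List V} (h : IsWalk A u v l) :
    (u :: l).getLast (List.cons_ne_nil u l) = v := h.2

theorem walkArcs_rel {A : V → V → Prop} {u v : V} {l : List V} (h : IsWalk A u v l) :
    ∀ f ∈ walkArcs u l, A f.1 f.2 := by
  induction l generalizing u with
  | nil => simp
  | cons a t ih =>
    rw [isWalk_cons_iff] at h
    intro f hf
    rcases (by simpa using hf : f = (u, a) ∨ f ∈ walkArcs a t) with rfl | hf
    · exact h.1
    · exact ih h.2 f hf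

theorem list_exists_max (L : List ℝ) (h : L ≠ []) : ∃ m ∈ L, ∀ x ∈ L, x ≤ m := by
  induction L with
  | nil => exact absurd rfl h
  | cons a t ih =>
    rcases t.eq_nil_or_concat with rfl | -
    · exact ⟨a, by simp⟩
    · rcases t with - | ⟨b, t'⟩
      · exact ⟨a, by simp⟩
      · obtain ⟨m, hm, hmax⟩ := ih (by simp)
        refine ⟨max a m, ?_, ?_⟩
        · rcases le_total a m with h' | h'
          · simp [max_eq_right h', hm]
          · simp [max_eq_left h']
        · intro x hx
          rcases (by simpa using hx : x = a ∨ x ∈ b :: t') with rfl | hx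
          · exact le_max_left _ _
          · exact le_trans (hmax x hx) (le_max_right _ _)

/-- Reversal: if every arc of a walk can be "returned" with arcs of cost at most `B`,
then there is a reverse walk with arcs of cost at most `B`. -/
theorem walk_reverse {A : V → V → Prop} (c : V → V → ℝ) {B : ℝ} :
    ∀ (l : List V) (u v : V), IsWalk A u v l →
      (∀ f ∈ walkArcs u l, ∃ l', IsWalk A f.2 f.1 l' ∧
          ∀ g ∈ walkArcs f.2 l', c g.1 g.2 ≤ B) →
      ∃ l', IsWalk A v u l' ∧ ∀ g ∈ walkArcs v l', c g.1 g.2 ≤ B := by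
  intro l
  induction l with
  | nil =>
    intro u v h _
    rw [isWalk_nil_iff] at h; subst h
    exact ⟨[], isWalk_nil_iff.2 rfl, by simp⟩
  | cons a t ih =>
    intro u v h hret
    rw [isWalk_cons_iff] at h
    obtain ⟨L1, hL1, hL1b⟩ := ih a v h.2 (fun f hf => hret f (by simp [hf]))
    obtain ⟨L2, hL2, hL2b⟩ := hret (u, a) (by simp)
    refine ⟨L1 ++ L2, isWalk_append hL1 hL2, ?_⟩
    intro g hg
    rw [walkArcs_append, isWalk_getLast hL1] at hg
    rcases List.mem_append.1 hg with hg | hg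
    · exact hL1b g hg
    · exact hL2b g hg

theorem isWalk_getLast? {A : V → V → Prop} {u v : V} {l : List V} (h : IsWalk A u v l) :
    (u :: l).getLast? = some v := by
  rw [List.getLast?_eq_getLast (List.cons_ne_nil u l), h.2]

theorem isWalk_of_getLast? {A : V → V → Prop} {u v : V} {l : List V}
    (hch : List.Chain A u l) (h : (u :: l).getLast? = some v) : IsWalk A u v l := by
  refine ⟨hch, ?_⟩
  rw [List.getLast?_eq_getLast (List.cons_ne_nil u l)] at h
  exact Option.some.inj h

/-- Every walk contains a simple walk (path) with the same endpoints, using a subset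
of its nodes and arcs. -/
theorem walk_dedup {A : V → V → Prop} {v : V} :
    ∀ (n : ℕ) (l : List V), l.length ≤ n → ∀ u, IsWalk A u v l →
      ∃ l', IsWalk A u v l' ∧ (u :: l').Nodup ∧ l' ⊆ l ∧ walkArcs u l' ⊆ walkArcs u l := by
  intro n
  induction n with
  | zero =>
    intro l hl u h
    rw [List.length_eq_zero_iff.1 (Nat.le_zero.1 hl)] at h ⊢
    exact ⟨[], h, by simp, by simp, by simp⟩
  | succ n ih =>
    intro l hl u h
    by_cases hu : u ∈ l
    · obtain ⟨l1, l2, rfl⟩ := List.append_of_mem hu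
      have hch : List.Chain A u l2 := (List.isChain_cons_split.1 h.1).2
      have hw2 : IsWalk A u v l2 := by
        refine isWalk_of_getLast? hch ?_
        have h2' : ((u :: l1) ++ (u :: l2)).getLast? = some v := by
          rw [show (u :: l1) ++ (u :: l2) = u :: (l1 ++ u :: l2) by simp]
          exact isWalk_getLast? h
        rw [List.getLast?_append,
          List.getLast?_eq_getLast (List.cons_ne_nil u l2)] at h2'
        rw [List.getLast?_eq_getLast (List.cons_ne_nil u l2)]
        simpa using h2'
      have hlen : l2.length ≤ n := by
        have := hl; simp [List.length_append] at this; omega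
      obtain ⟨l', h1, h2, h3, h4⟩ := ih l2 hlen u hw2
      refine ⟨l', h1, h2, fun x hx => by simp [h3 hx], ?_⟩
      intro g hg
      have : g ∈ walkArcs u l2 := h4 hg
      rw [show l1 ++ u :: l2 = (l1 ++ [u]) ++ l2 by simp, walkArcs_append]
      have hlu : ((u :: (l1 ++ [u])).getLast (List.cons_ne_nil _ _)) = u := by
        have : (u :: (l1 ++ [u])).getLast? = some u := by
          rw [show u :: (l1 ++ [u]) = (u :: l1) ++ [u] by simp]
          exact List.getLast?_concat
        rw [List.getLast?_eq_getLast (List.cons_ne_nil _ _)] at this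
        exact Option.some.inj this
      rw [hlu]
      exact List.mem_append.2 (Or.inr this)
    · rcases l with - | ⟨a, t⟩
      · exact ⟨[], h, by simp, by simp, by simp⟩
      · rw [isWalk_cons_iff] at h
        obtain ⟨l', h1, h2, h3, h4⟩ := ih t (by simp at hl; omega) a h.2
        refine ⟨a :: l', isWalk_cons_iff.2 ⟨h.1, h1⟩, ?_, ?_, ?_⟩
        · refine List.nodup_cons.2 ⟨?_, h2⟩
          intro hmem
          rcases (by simpa using hmem : u = a ∨ u ∈ l') with rfl | hm
          · exact hu (by simp)
          · exact hu (by simp [h3 hm])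
        · intro x hx
          rcases (by simpa using hx : x = a ∨ x ∈ l') with rfl | hm
          · simp
          · simp [h3 hm]
        · intro g hg
          rcases (by simpa using hg : g = (u, a) ∨ g ∈ walkArcs a l') with rfl | hm
          · simp
          · simp [h4 hm]

theorem bottleneck_le {A : V → V → Prop} {c : V → V → ℝ} {i j : V} {l : List V} {t : ℝ}
    (hl : IsWalk A i j l) (hb : ∀ f ∈ walkArcs i l, c f.1 f.2 ≤ t) (ht : 0 ≤ t) :
    bottleneck A c i j ≤ t := by
  by_cases hB : BddBelow {t | ∃ l, IsWalk A i j l ∧ ∀ f ∈ walkArcs i l, c f.1 f.2 ≤ t}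
  · exact csInf_le hB ⟨l, hl, hb⟩
  · rw [bottleneck, csInf_of_not_bddBelow hB, Real.sInf_empty]
    exact ht

theorem walk_ne_nil {A : V → V → Prop} {i j : V} {l : List V} (hl : IsWalk A i j l)
    (hij : i ≠ j) : l ≠ [] := by
  rintro rfl
  exact hij (isWalk_nil_iff.1 hl)

theorem bottleneck_nonneg {A : V → V → Prop} {c : V → V → ℝ}
    (hc : ∀ x y, A x y → 0 ≤ c x y) (i j : V) : 0 ≤ bottleneck A c i j := by
  by_cases hij : i = j
  · subst hij
    have huniv : {t | ∃ l, IsWalk A i i l ∧ ∀ f ∈ walkArcs i l, c f.1 f.2 ≤ t} = Set.univ := by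
      ext t
      simp only [Set.mem_setOf_eq, Set.mem_univ, iff_true]
      exact ⟨[], isWalk_nil_iff.2 rfl, by simp⟩
    rw [bottleneck, huniv, csInf_of_not_bddBelow not_bddBelow_univ, Real.sInf_empty]
  · refine Real.le_sInf ?_ le_rfl
    intro t ht
    obtain ⟨l, hl, hb⟩ := ht
    rcases l with - | ⟨a, t'⟩
    · exact absurd rfl (walk_ne_nil hl hij)
    · have ha : A i a := (isWalk_cons_iff.1 hl).1
      exact le_trans (hc i a ha) (hb (i, a) (by simp))

theorem bottleneck_attained [Fintype V] {A : V → V → Prop} {c : V → V → ℝ}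
    (hsc : StronglyConnected A) (i j : V) :
    ∃ l, IsWalk A i j l ∧ ∀ f ∈ walkArcs i l, c f.1 f.2 ≤ bottleneck A c i j := by
  classical
  by_cases hij : i = j
  · subst hij
    exact ⟨[], isWalk_nil_iff.2 rfl, by simp⟩
  -- the set of achievable "max arc cost" values of walks from i to j
  set M : Set ℝ := {m | ∃ l, IsWalk A i j l ∧
      m ∈ (walkArcs i l).map (fun e => c e.1 e.2) ∧
      ∀ x ∈ (walkArcs i l).map (fun e => c e.1 e.2), x ≤ m} with hM
  have hMsub : M ⊆ Set.range (fun p : V × V => c p.1 p.2) := by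
    rintro m ⟨l, -, hm, -⟩
    obtain ⟨e, -, he⟩ := List.mem_map.1 hm
    exact ⟨e, he⟩
  have hMfin : M.Finite := (Set.finite_range _).subset hMsub
  have hMne : M.Nonempty := by
    obtain ⟨l, hl⟩ := hsc i j
    have hne : (walkArcs i l).map (fun e => c e.1 e.2) ≠ [] := by
      rcases l with - | ⟨a, t⟩
      · exact absurd rfl (walk_ne_nil hl hij)
      · simp
    obtain ⟨m, hm, hmax⟩ := list_exists_max _ hne
    exact ⟨m, l, hl, hm, hmax⟩
  obtain ⟨m0, hm0M, hm0min⟩ : ∃ m0 ∈ M, ∀ m ∈ M, m0 ≤ m := by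
    have hne' : hMfin.toFinset.Nonempty := by
      rwa [Set.Finite.toFinset_nonempty]
    refine ⟨hMfin.toFinset.min' hne', ?_, ?_⟩
    · have := hMfin.toFinset.min'_mem hne'
      rwa [Set.Finite.mem_toFinset] at this
    · intro m hm
      exact hMfin.toFinset.min'_le m (by rwa [Set.Finite.mem_toFinset])
  obtain ⟨l0, hl0, hm0mem, hm0max⟩ := hm0M
  have hleast : IsLeast {t | ∃ l, IsWalk A i j l ∧ ∀ f ∈ walkArcs i l, c f.1 f.2 ≤ t} m0 := by
    constructor
    · exact ⟨l0, hl0, fun f hf => hm0max _ (List.mem_map.2 ⟨f, hf, rfl⟩)⟩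
    · intro t ht
      obtain ⟨l, hl, hb⟩ := ht
      have hne : (walkArcs i l).map (fun e => c e.1 e.2) ≠ [] := by
        rcases l with - | ⟨a, t'⟩
        · exact absurd rfl (walk_ne_nil hl hij)
        · simp
      obtain ⟨m, hm, hmax⟩ := list_exists_max _ hne
      have hmM : m ∈ M := ⟨l, hl, hm, hmax⟩
      obtain ⟨e, heMem, he⟩ := List.mem_map.1 hm
      exact le_trans (hm0min m hmM) (he ▸ hb e heMem)
  have : bottleneck A c i j = m0 := hleast.csInf_eq
  rw [this]
  exact ⟨l0, hl0, fun f hf => hm0max _ (List.mem_map.2 ⟨f, hf, rfl⟩)⟩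

/-- A strongly connected digraph with nonnegative arc costs is
`ξ`-min-balanced iff the bottleneck costs satisfy `b(j,i) ≤ ξ·b(i,j)` for all nodes. -/
theorem minBalanced_iff_bottleneck [Fintype V] (A : V → V → Prop) (c : V → V → ℝ)
    (hc : ∀ x y, A x y → 0 ≤ c x y) (ξ : ℝ) (hξ : 1 ≤ ξ)
    (hsc : StronglyConnected A) :
    MinBalanced A c ξ ↔ ∀ i j : V, bottleneck A c j i ≤ ξ * bottleneck A c i j := by
  constructor
  · -- min-balanced implies the bottleneck inequality
    intro hmb i j
    obtain ⟨l, hl, hb⟩ := bottleneck_attained (c := c) hsc i j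
    have hb0 : 0 ≤ bottleneck A c i j := bottleneck_nonneg hc i j
    have hξ0 : 0 ≤ ξ := by linarith
    have hB0 : 0 ≤ ξ * bottleneck A c i j := mul_nonneg hξ0 hb0
    have hrev : ∀ f ∈ walkArcs i l, ∃ l', IsWalk A f.2 f.1 l' ∧
        ∀ g ∈ walkArcs f.2 l', c g.1 g.2 ≤ ξ * bottleneck A c i j := by
      intro f hf
      have hAf : A f.1 f.2 := walkArcs_rel hl f hf
      obtain ⟨lc, ⟨-, hw, -⟩, hcyc⟩ := hmb f.1 f.2 hAf
      refine ⟨lc, hw, ?_⟩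
      intro g hg
      have : c g.1 g.2 ≤ ξ * c f.1 f.2 := hcyc g (by simp [cycleArcs, hg])
      have h2 : ξ * c f.1 f.2 ≤ ξ * bottleneck A c i j :=
        mul_le_mul_of_nonneg_left (hb f hf) hξ0
      linarith
    obtain ⟨l', hl', hb'⟩ := walk_reverse (A := A) c l i j hl hrev
    exact bottleneck_le hl' hb' hB0
  · -- the bottleneck inequality implies min-balanced
    intro hb x y hA
    have hcxy : 0 ≤ c x y := hc x y hA
    by_cases hxy : y = x
    · refine ⟨[], ⟨hA, isWalk_nil_iff.2 hxy, by simp⟩, ?_⟩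
      intro f hf
      have hfe : f = (x, y) := by simpa [cycleArcs] using hf
      have h0 : c x y ≤ ξ * c x y := by nlinarith
      simpa [hfe] using h0
    · have hwxy : IsWalk A x y [y] := isWalk_cons_iff.2 ⟨hA, isWalk_nil_iff.2 rfl⟩
      have hbxy : bottleneck A c x y ≤ c x y :=
        bottleneck_le hwxy (by simp) hcxy
      have h1 : bottleneck A c y x ≤ ξ * c x y :=
        le_trans (hb x y) (mul_le_mul_of_nonneg_left hbxy (by linarith))
      obtain ⟨l, hl, hbnd⟩ := bottleneck_attained (c := c) hsc y x
      obtain ⟨l', hl', hnd, -, hsuba⟩ := walk_dedup l.length l le_rfl y hl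
      refine ⟨l', ⟨hA, hl', hnd⟩, ?_⟩
      intro f hf
      rcases (by simpa [cycleArcs] using hf : f = (x, y) ∨ f ∈ walkArcs y l') with rfl | hf'
      · have h0 : c x y ≤ ξ * c x y := by nlinarith
        simpa using h0
      · exact le_trans (hbnd f (hsuba hf')) h1
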